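/- For any real numbers y, δ, λ, η with η > 0 and any p ∈ ℝ, ∫ℝ z² · g(y; λp+δ, η²/z²) · g(z; 0, 1) dz = (2/(π η)) · [1 + ((y − λp − δ)/η)²]^{−2}, where g(x; a, b) = (1/√(2πb)) exp(−(x−a)²/(2b)) is the normal density and the integrand at z = 0 is interpreted as 0. -/

import Mathlib

open MeasureTheory Real

/-- The normal density with mean `a` and variance `b`. -/
noncomputable def normalPdf (a b x : ℝ) : ℝ :=
  (1 / Real.sqrt (2 * π * b)) * Real.exp (-(x - a) ^ 2 / (2 * b))

/-- The `z`-integral appearing in the E-step of the EM algorithm: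
`∫ℝ z² g(y; λp+δ, η²/z²) g(z;0,1) dz = (2/(πη)) [1 + ((y−λp−δ)/η)²]^{−2}`,
the integrand at `z = 0` being interpreted as `0`. -/
theorem estep_z_integral (y δ lam η p : ℝ) (hη : 0 < η) :
    ∫ z : ℝ, (if z = 0 then 0 else
      z ^ 2 * normalPdf (lam * p + δ) (η ^ 2 / z ^ 2) y * normalPdf 0 1 z) =
      (2 / (π * η)) * (1 + ((y - lam * p - δ) / η) ^ 2) ^ (-2 : ℤ) := by
  have hπ : 0 < π := Real.pi_pos
  set c : ℝ := 1 + ((y - lam * p - δ) / η) ^ 2 with hc_def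
  have hc : 0 < c := by positivity
  set f : ℝ → ℝ := fun t => (1 / (2 * π * η)) * (t ^ (3 : ℝ) * Real.exp (-(c / 2) * t ^ (2 : ℝ)))
    with hf_def
  have hs2π : Real.sqrt (2 * π) ^ 2 = 2 * π := Real.sq_sqrt (by positivity)
  have hs2π' : (0 : ℝ) < Real.sqrt (2 * π) := Real.sqrt_pos.mpr (by positivity)
  have key : ∀ z : ℝ, z ≠ 0 →
      z ^ 2 * normalPdf (lam * p + δ) (η ^ 2 / z ^ 2) y * normalPdf 0 1 z = f |z| := by
    intro z hz
    have hzabs : (0 : ℝ) < |z| := abs_pos.mpr hz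
    have habs3 : |z| ^ (3 : ℝ) = |z| ^ (3 : ℕ) := by
      rw [show ((3 : ℝ)) = ((3 : ℕ) : ℝ) by norm_num, Real.rpow_natCast]
    have habs2 : |z| ^ (2 : ℝ) = z ^ 2 := by
      rw [show ((2 : ℝ)) = ((2 : ℕ) : ℝ) by norm_num, Real.rpow_natCast, sq_abs]
    have hsq : Real.sqrt (2 * π * (η ^ 2 / z ^ 2)) = Real.sqrt (2 * π) * η / |z| := by
      rw [Real.sqrt_mul (by positivity), Real.sqrt_div (by positivity), Real.sqrt_sq hη.le,
        Real.sqrt_sq_eq_abs]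
      ring
    have hz2 : (0 : ℝ) < z ^ 2 := by positivity
    simp only [hf_def, normalPdf, habs3, habs2, hsq, mul_one, sub_zero]
    have hexp : Real.exp (-(y - (lam * p + δ)) ^ 2 / (2 * (η ^ 2 / z ^ 2))) *
        Real.exp (-z ^ 2 / 2) = Real.exp (-(c / 2) * z ^ 2) := by
      rw [← Real.exp_add]
      congr 1
      rw [hc_def]
      field_simp
      ring
    have h3 : |z| ^ 3 = z ^ 2 * |z| := by
      rw [show (3 : ℕ) = 2 + 1 by norm_num, pow_succ, sq_abs]
    rw [h3, ← hexp, show (2 : ℝ) * π = Real.sqrt (2 * π) ^ 2 from hs2π.symm]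
    field_simp
    ring_nf
    rw [Real.sq_sqrt (by positivity : (0:ℝ) ≤ π * 2), Real.sq_sqrt (by positivity : (0:ℝ) ≤ π * 2)]
  have hae : (fun z : ℝ => (if z = 0 then 0 else
      z ^ 2 * normalPdf (lam * p + δ) (η ^ 2 / z ^ 2) y * normalPdf 0 1 z))
      =ᵐ[volume] fun z => f |z| := by
    have h0 : ∀ᵐ z : ℝ, z ≠ 0 := by
      refine (MeasureTheory.ae_iff).mpr ?_
      simp only [ne_eq, not_not, Set.setOf_eq_eq_singleton]
      exact Real.volume_singleton
    filter_upwards [h0] with z hz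
    rw [if_neg hz, key z hz]
  rw [MeasureTheory.integral_congr_ae hae, integral_comp_abs (f := f), hf_def]
  simp only
  rw [MeasureTheory.integral_const_mul,
    integral_rpow_mul_exp_neg_mul_rpow (by norm_num : (0:ℝ) < 2)
      (by norm_num : (-1:ℝ) < 3) (by positivity : (0:ℝ) < c / 2)]
  rw [show (-((3:ℝ) + 1) / 2) = ((-2 : ℤ) : ℝ) by norm_num, Real.rpow_intCast,
    show ((3:ℝ) + 1) / 2 = 2 by norm_num, Real.Gamma_two]
  rw [zpow_neg, zpow_neg, zpow_two, zpow_two]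
  field_simp
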